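/- Let C be a 2-identifying code in the hexagonal grid G_H and c = (0,0) ∈ C with neighbor (0,1) ∈ C and (−1,0), (1,0) ∉ C. Suppose moreover (−3,0) ∈ C and (1,−1) ∈ C. Then s_2(C;c) ≤ 15/4. -/

import Mathlib

def hexGraph : SimpleGraph (ℤ × ℤ) where
  Adj u v := (u.2 = v.2 ∧ (u.1 = v.1 + 1 ∨ u.1 = v.1 - 1)) ∨
    (u.1 = v.1 ∧ (((u.1 + u.2) % 2 = 0 ∧ u.2 = v.2 - 1) ∨ ((u.1 + u.2) % 2 ≠ 0 ∧ u.2 = v.2 + 1)))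
  symm := ⟨by rintro ⟨a, b⟩ ⟨c, d⟩ h; dsimp only at *; omega⟩
  loopless := ⟨by rintro ⟨a, b⟩ h; dsimp only at h; omega⟩

def hexBall (r : ℕ) (u : ℤ × ℤ) : Set (ℤ × ℤ) := {x | hexGraph.dist u x ≤ r}

def I2 (C : Set (ℤ × ℤ)) (u : ℤ × ℤ) : Set (ℤ × ℤ) := hexBall 2 u ∩ C

def isIdentifying2 (C : Set (ℤ × ℤ)) : Prop :=
  ∀ u : ℤ × ℤ, (I2 C u).Nonempty ∧ ∀ v : ℤ × ℤ, u ≠ v → I2 C u ≠ I2 C v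

noncomputable def share2 (C : Set (ℤ × ℤ)) (c : ℤ × ℤ) : ℝ :=
  ∑' u : (hexBall 2 c), 1 / ((I2 C ↑u).ncard : ℝ)

def Q (n : ℕ) : Set (ℤ × ℤ) := {p | |p.1| ≤ (n : ℤ) ∧ |p.2| ≤ (n : ℤ)}

noncomputable def density (C : Set (ℤ × ℤ)) : ℝ :=
  Filter.limsup (fun n : ℕ => ((C ∩ Q n).ncard : ℝ) / ((Q n).ncard : ℝ)) Filter.atTop

lemma hexAdj_iff (a b c d : ℤ) : hexGraph.Adj (a,b) (c,d) ↔
    ((b = d ∧ (a = c + 1 ∨ a = c - 1)) ∨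
    (a = c ∧ (((a + b) % 2 = 0 ∧ b = d - 1) ∨ ((a + b) % 2 ≠ 0 ∧ b = d + 1)))) := Iff.rfl

lemma hexAdj (a b c d : ℤ) (h : (b = d ∧ (a = c + 1 ∨ a = c - 1)) ∨
    (a = c ∧ (((a + b) % 2 = 0 ∧ b = d - 1) ∨ ((a + b) % 2 ≠ 0 ∧ b = d + 1)))) :
    hexGraph.Adj (a,b) (c,d) := h

lemma reach_right (i j : ℤ) : hexGraph.Reachable (i,j) (i+1,j) :=
  (hexAdj _ _ _ _ (by omega)).symm.reachable.symm

lemma reach_up (i j : ℤ) : hexGraph.Reachable (i,j) (i,j+1) := by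
  rcases Int.emod_two_eq (i+j) with h | h
  · exact (hexAdj i j i (j+1) (by omega)).reachable
  · exact ((hexAdj i j (i+1) j (by omega)).reachable.trans
      (hexAdj (i+1) j (i+1) (j+1) (by omega)).reachable).trans
      (hexAdj (i+1) (j+1) i (j+1) (by omega)).reachable

lemma reach00 : ∀ v : ℤ × ℤ, hexGraph.Reachable ((0:ℤ),(0:ℤ)) v := by
  have horiz : ∀ a : ℤ, hexGraph.Reachable ((0:ℤ),(0:ℤ)) (a, 0) := by
    intro a
    induction a using Int.induction_on with
    | zero => exact SimpleGraph.Reachable.refl _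
    | succ k ih => exact ih.trans (reach_right k 0)
    | pred k ih => exact ih.trans (by simpa using (reach_right (-(k:ℤ)-1) 0).symm)
  rintro ⟨a, b⟩
  refine (horiz a).trans ?_
  induction b using Int.induction_on with
  | zero => exact SimpleGraph.Reachable.refl _
  | succ k ih => exact ih.trans (reach_up a k)
  | pred k ih => exact ih.trans (by simpa using (reach_up a (-(k:ℤ)-1)).symm)

lemma hexReach (u v : ℤ × ℤ) : hexGraph.Reachable u v := (reach00 u).symm.trans (reach00 v)

lemma walk_lb : ∀ {u v : ℤ × ℤ} (p : hexGraph.Walk u v),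
    (v.1 - u.1).natAbs + (v.2 - u.2).natAbs ≤ p.length := by
  intro u v p
  induction p with
  | nil => simp
  | @cons u w v h q ih =>
    rw [SimpleGraph.Walk.length_cons]
    obtain ⟨a, b⟩ := u; obtain ⟨c, d⟩ := w; obtain ⟨e, f⟩ := v
    rw [hexAdj_iff] at h
    simp only at *
    omega

lemma chain_of_walk : ∀ {u v : ℤ × ℤ} (p : hexGraph.Walk u v), p.length ≤ 2 →
    v = u ∨ hexGraph.Adj u v ∨ ∃ w, hexGraph.Adj u w ∧ hexGraph.Adj w v := by
  intro u v p
  match p with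
  | .nil => exact fun _ => Or.inl rfl
  | .cons h .nil => exact fun _ => Or.inr (Or.inl h)
  | .cons h (.cons h' .nil) => exact fun _ => Or.inr (Or.inr ⟨_, h, h'⟩)
  | .cons h (.cons h' (.cons h'' q)) =>
    intro hl
    simp only [SimpleGraph.Walk.length_cons] at hl
    omega

lemma mem_ball_iff (u x : ℤ × ℤ) : x ∈ hexBall 2 u ↔
    (x = u ∨ hexGraph.Adj u x ∨ ∃ w, hexGraph.Adj u w ∧ hexGraph.Adj w x) := by
  constructor
  · intro hx
    obtain ⟨p, hp⟩ := (hexReach u x).exists_walk_length_eq_dist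
    exact chain_of_walk p (by rw [hp]; exact hx)
  · rintro (rfl | h | ⟨w, h1, h2⟩)
    · simp [hexBall, SimpleGraph.dist_self]
    · have := SimpleGraph.dist_le (SimpleGraph.Walk.cons h .nil)
      simpa [hexBall] using this.trans (by simp)
    · have := SimpleGraph.dist_le (SimpleGraph.Walk.cons h1 (SimpleGraph.Walk.cons h2 .nil))
      simpa [hexBall] using this.trans (by simp)

lemma ball_finite (u : ℤ × ℤ) : (hexBall 2 u).Finite := by
  apply Set.Finite.subset (Set.finite_Icc (u.1 - 2, u.2 - 2) (u.1 + 2, u.2 + 2))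
  intro x hx
  obtain ⟨p, hp⟩ := (hexReach u x).exists_walk_length_eq_dist
  have h1 := walk_lb p
  have h2 : hexGraph.dist u x ≤ 2 := hx
  rw [hp] at h1
  simp only [Set.mem_Icc, Prod.le_def]
  omega

def ballSet : Set (ℤ × ℤ) :=
  {(-2,0),(-1,-1),(-1,0),(-1,1),(0,0),(0,1),(1,-1),(1,0),(1,1),(2,0)}

lemma compact_mem (e f : ℤ)
    (h : (f = 0 ∧ -2 ≤ e ∧ e ≤ 2) ∨ (f = 1 ∧ -1 ≤ e ∧ e ≤ 1) ∨ (f = -1 ∧ (e = -1 ∨ e = 1))) :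
    (e,f) ∈ ballSet := by
  simp only [ballSet, Set.mem_insert_iff, Set.mem_singleton_iff, Prod.mk.injEq]
  rcases h with ⟨rfl, h1, h2⟩ | ⟨rfl, h1, h2⟩ | ⟨rfl, rfl | rfl⟩
  · interval_cases e <;> norm_num
  · interval_cases e <;> norm_num
  · norm_num
  · norm_num

lemma ball00 : hexBall 2 ((0:ℤ),(0:ℤ)) = ballSet := by
  ext ⟨e, f⟩
  rw [mem_ball_iff]
  constructor
  · rintro (h | h | ⟨⟨a, b⟩, h1, h2⟩)
    · simp only [Prod.mk.injEq] at h
      exact compact_mem e f (by omega)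
    · rw [hexAdj_iff] at h
      exact compact_mem e f (by omega)
    · rw [hexAdj_iff] at h1; rw [hexAdj_iff] at h2
      exact compact_mem e f (by omega)
  · intro hx
    simp only [ballSet, Set.mem_insert_iff, Set.mem_singleton_iff, Prod.mk.injEq] at hx
    rcases hx with ⟨rfl, rfl⟩ | ⟨rfl, rfl⟩ | ⟨rfl, rfl⟩ | ⟨rfl, rfl⟩ | ⟨rfl, rfl⟩ |
      ⟨rfl, rfl⟩ | ⟨rfl, rfl⟩ | ⟨rfl, rfl⟩ | ⟨rfl, rfl⟩ | ⟨rfl, rfl⟩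
    · exact Or.inr (Or.inr ⟨(-1,0), hexAdj _ _ _ _ (by omega), hexAdj _ _ _ _ (by omega)⟩)
    · exact Or.inr (Or.inr ⟨(-1,0), hexAdj _ _ _ _ (by omega), hexAdj _ _ _ _ (by omega)⟩)
    · exact Or.inr (Or.inl (hexAdj _ _ _ _ (by omega)))
    · exact Or.inr (Or.inr ⟨(0,1), hexAdj _ _ _ _ (by omega), hexAdj _ _ _ _ (by omega)⟩)
    · exact Or.inl rfl
    · exact Or.inr (Or.inl (hexAdj _ _ _ _ (by omega)))
    · exact Or.inr (Or.inr ⟨(1,0), hexAdj _ _ _ _ (by omega), hexAdj _ _ _ _ (by omega)⟩)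
    · exact Or.inr (Or.inl (hexAdj _ _ _ _ (by omega)))
    · exact Or.inr (Or.inr ⟨(0,1), hexAdj _ _ _ _ (by omega), hexAdj _ _ _ _ (by omega)⟩)
    · exact Or.inr (Or.inr ⟨(1,0), hexAdj _ _ _ _ (by omega), hexAdj _ _ _ _ (by omega)⟩)

def ballFinset : Finset (ℤ × ℤ) :=
  {(-2,0),(-1,-1),(-1,0),(-1,1),(0,0),(0,1),(1,-1),(1,0),(1,1),(2,0)}

lemma coe_ballFinset : (↑ballFinset : Set (ℤ × ℤ)) = ballSet := by
  simp [ballFinset, ballSet]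

lemma I2_finite (C : Set (ℤ × ℤ)) (u : ℤ × ℤ) : (I2 C u).Finite :=
  (ball_finite u).inter_of_left C

lemma two_le_ncard {C : Set (ℤ × ℤ)} {u a b : ℤ × ℤ} (hab : a ≠ b)
    (ha : a ∈ I2 C u) (hb : b ∈ I2 C u) : 2 ≤ (I2 C u).ncard := by
  have hsub : ({a, b} : Set (ℤ × ℤ)) ⊆ I2 C u := by
    intro x hx; rcases hx with rfl | rfl; exacts [ha, hb]
  calc 2 = ({a, b} : Set (ℤ × ℤ)).ncard := (Set.ncard_pair hab).symm
    _ ≤ _ := Set.ncard_le_ncard hsub (I2_finite C u)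

lemma three_le_ncard {C : Set (ℤ × ℤ)} {u a b c : ℤ × ℤ} (hab : a ≠ b) (hac : a ≠ c)
    (hbc : b ≠ c) (ha : a ∈ I2 C u) (hb : b ∈ I2 C u) (hc : c ∈ I2 C u) :
    3 ≤ (I2 C u).ncard := by
  have hsub : ({a, b, c} : Set (ℤ × ℤ)) ⊆ I2 C u := by
    intro x hx; rcases hx with rfl | rfl | rfl; exacts [ha, hb, hc]
  have h3 : ({a, b, c} : Set (ℤ × ℤ)).ncard = 3 := by
    rw [Set.ncard_insert_of_notMem (by simp [hab, hac]), Set.ncard_pair hbc]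
  calc 3 = ({a, b, c} : Set (ℤ × ℤ)).ncard := h3.symm
    _ ≤ _ := Set.ncard_le_ncard hsub (I2_finite C u)

lemma excl {C : Set (ℤ × ℤ)} (hC : isIdentifying2 C) {u v : ℤ × ℤ} (huv : u ≠ v)
    (S : Set (ℤ × ℤ)) (hSu : S ⊆ I2 C u) (hSv : S ⊆ I2 C v)
    (hnu : (I2 C u).ncard ≤ S.ncard) (hnv : (I2 C v).ncard ≤ S.ncard) : False := by
  have h1 : S = I2 C u := Set.eq_of_subset_of_ncard_le hSu hnu (I2_finite C u)
  have h2 : S = I2 C v := Set.eq_of_subset_of_ncard_le hSv hnv (I2_finite C v)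
  exact (hC u).2 v huv (h1 ▸ h2)

lemma inv_le_inv_nat {n k : ℕ} (hk : 0 < k) (h : k ≤ n) : (1:ℝ)/(n:ℝ) ≤ 1/(k:ℝ) :=
  one_div_le_one_div_of_le (by exact_mod_cast hk) (by exact_mod_cast h)

lemma inv2 {x : ℕ} (h : 2 ≤ x) : (1:ℝ)/x ≤ 1/2 := by
  have := inv_le_inv_nat (k := 2) (by norm_num) h; simpa using this

lemma inv3 {x : ℕ} (h : 3 ≤ x) : (1:ℝ)/x ≤ 1/3 := by
  have := inv_le_inv_nat (k := 3) (by norm_num) h; simpa using this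

lemma inv4 {x : ℕ} (h : 4 ≤ x) : (1:ℝ)/x ≤ 1/4 := by
  have := inv_le_inv_nat (k := 4) (by norm_num) h; simpa using this

lemma tripleBound {x y z : ℕ} (hx : 2 ≤ x) (hy : 2 ≤ y) (hz : 2 ≤ z)
    (hxy : ¬(x ≤ 2 ∧ y ≤ 2)) (hxz : ¬(x ≤ 2 ∧ z ≤ 2)) (hyz : ¬(y ≤ 2 ∧ z ≤ 2)) :
    (1:ℝ)/x + 1/y + 1/z ≤ 7/6 := by
  rcases le_or_gt x 2 with h | h
  · have h1 := inv2 hx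
    have h2 := inv3 (x := y) (by omega)
    have h3 := inv3 (x := z) (by omega)
    linarith
  · rcases le_or_gt y 2 with h' | h'
    · have h1 := inv3 (x := x) (by omega)
      have h2 := inv2 hy
      have h3 := inv3 (x := z) (by omega)
      linarith
    · have h1 := inv3 (x := x) (by omega)
      have h2 := inv3 (x := y) (by omega)
      have h3 := inv2 hz
      linarith

lemma pairBound {x y : ℕ} (hx : 3 ≤ x) (hy : 3 ≤ y) (hxy : ¬(x ≤ 3 ∧ y ≤ 3)) :
    (1:ℝ)/x + 1/y ≤ 7/12 := by
  rcases le_or_gt x 3 with h | h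
  · have h1 := inv3 hx
    have h2 := inv4 (x := y) (by omega)
    linarith
  · have h1 := inv4 (x := x) (by omega)
    have h2 := inv3 hy
    linarith

lemma excl2 {C : Set (ℤ × ℤ)} (hC : isIdentifying2 C) {u v a b : ℤ × ℤ} (huv : u ≠ v)
    (hab : a ≠ b) (hau : a ∈ I2 C u) (hbu : b ∈ I2 C u) (hav : a ∈ I2 C v)
    (hbv : b ∈ I2 C v) (hnu : (I2 C u).ncard ≤ 2) (hnv : (I2 C v).ncard ≤ 2) : False := by
  refine excl hC huv {a, b} ?_ ?_ ?_ ?_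
  · intro x hx; rcases hx with rfl | rfl; exacts [hau, hbu]
  · intro x hx; rcases hx with rfl | rfl; exacts [hav, hbv]
  · rwa [Set.ncard_pair hab]
  · rwa [Set.ncard_pair hab]

lemma excl3 {C : Set (ℤ × ℤ)} (hC : isIdentifying2 C) {u v a b c : ℤ × ℤ} (huv : u ≠ v)
    (hab : a ≠ b) (hac : a ≠ c) (hbc : b ≠ c)
    (hau : a ∈ I2 C u) (hbu : b ∈ I2 C u) (hcu : c ∈ I2 C u)
    (hav : a ∈ I2 C v) (hbv : b ∈ I2 C v) (hcv : c ∈ I2 C v)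
    (hnu : (I2 C u).ncard ≤ 3) (hnv : (I2 C v).ncard ≤ 3) : False := by
  have h3 : ({a, b, c} : Set (ℤ × ℤ)).ncard = 3 := by
    rw [Set.ncard_insert_of_notMem (by simp [hab, hac]), Set.ncard_pair hbc]
  refine excl hC huv {a, b, c} ?_ ?_ ?_ ?_
  · intro x hx; rcases hx with rfl | rfl | rfl; exacts [hau, hbu, hcu]
  · intro x hx; rcases hx with rfl | rfl | rfl; exacts [hav, hbv, hcv]
  · rwa [h3]
  · rwa [h3]

lemma sum_expand (f : ℤ × ℤ → ℝ) : ∑ x ∈ ballFinset, f x =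
    f (-2,0) + f (-1,-1) + f (-1,0) + f (-1,1) + f (0,0) + f (0,1) + f (1,-1) + f (1,0)
      + f (1,1) + f (2,0) := by
  simp only [ballFinset]
  rw [Finset.sum_insert (by decide), Finset.sum_insert (by decide),
    Finset.sum_insert (by decide), Finset.sum_insert (by decide),
    Finset.sum_insert (by decide), Finset.sum_insert (by decide),
    Finset.sum_insert (by decide), Finset.sum_insert (by decide),
    Finset.sum_insert (by decide), Finset.sum_singleton]
  ring


theorem stmt17 (C : Set (ℤ × ℤ)) (hC : isIdentifying2 C)
    (h00 : ((0 : ℤ), (0 : ℤ)) ∈ C) (h01 : ((0 : ℤ), (1 : ℤ)) ∈ C)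
    (hm10 : ((-1 : ℤ), (0 : ℤ)) ∉ C) (h10 : ((1 : ℤ), (0 : ℤ)) ∉ C)
    (hm30 : ((-3 : ℤ), (0 : ℤ)) ∈ C) (h1m1 : ((1 : ℤ), (-1 : ℤ)) ∈ C) :
    share2 C ((0 : ℤ), (0 : ℤ)) ≤ 15 / 4 := by
  -- ball membership facts
  have W2 : ∀ u w x : ℤ × ℤ, hexGraph.Adj u w → hexGraph.Adj w x → x ∈ hexBall 2 u :=
    fun u w x h1 h2 => (mem_ball_iff u x).mpr (Or.inr (Or.inr ⟨w, h1, h2⟩))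
  have W1 : ∀ u x : ℤ × ℤ, hexGraph.Adj u x → x ∈ hexBall 2 u :=
    fun u x h => (mem_ball_iff u x).mpr (Or.inr (Or.inl h))
  have W0 : ∀ u : ℤ × ℤ, u ∈ hexBall 2 u := fun u => (mem_ball_iff u u).mpr (Or.inl rfl)
  -- I2 membership facts (x ∈ I2 C u)
  -- u = (-2,0)
  have mA1 : ((0:ℤ),(0:ℤ)) ∈ I2 C (-2,0) :=
    ⟨W2 _ (-1,0) _ (hexAdj _ _ _ _ (by omega)) (hexAdj _ _ _ _ (by omega)), h00⟩
  have mA2 : ((-3:ℤ),(0:ℤ)) ∈ I2 C (-2,0) := ⟨W1 _ _ (hexAdj _ _ _ _ (by omega)), hm30⟩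
  -- u = (-1,-1)
  have mB1 : ((0:ℤ),(0:ℤ)) ∈ I2 C (-1,-1) :=
    ⟨W2 _ (-1,0) _ (hexAdj _ _ _ _ (by omega)) (hexAdj _ _ _ _ (by omega)), h00⟩
  have mB2 : ((1:ℤ),(-1:ℤ)) ∈ I2 C (-1,-1) :=
    ⟨W2 _ (0,-1) _ (hexAdj _ _ _ _ (by omega)) (hexAdj _ _ _ _ (by omega)), h1m1⟩
  -- u = (-1,0)
  have mC1 : ((0:ℤ),(0:ℤ)) ∈ I2 C (-1,0) := ⟨W1 _ _ (hexAdj _ _ _ _ (by omega)), h00⟩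
  have mC2 : ((0:ℤ),(1:ℤ)) ∈ I2 C (-1,0) :=
    ⟨W2 _ (0,0) _ (hexAdj _ _ _ _ (by omega)) (hexAdj _ _ _ _ (by omega)), h01⟩
  have mC3 : ((-3:ℤ),(0:ℤ)) ∈ I2 C (-1,0) :=
    ⟨W2 _ (-2,0) _ (hexAdj _ _ _ _ (by omega)) (hexAdj _ _ _ _ (by omega)), hm30⟩
  -- u = (-1,1)
  have mD1 : ((0:ℤ),(0:ℤ)) ∈ I2 C (-1,1) :=
    ⟨W2 _ (0,1) _ (hexAdj _ _ _ _ (by omega)) (hexAdj _ _ _ _ (by omega)), h00⟩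
  have mD2 : ((0:ℤ),(1:ℤ)) ∈ I2 C (-1,1) := ⟨W1 _ _ (hexAdj _ _ _ _ (by omega)), h01⟩
  -- u = (0,0)
  have mE1 : ((0:ℤ),(0:ℤ)) ∈ I2 C (0,0) := ⟨W0 _, h00⟩
  have mE2 : ((0:ℤ),(1:ℤ)) ∈ I2 C (0,0) := ⟨W1 _ _ (hexAdj _ _ _ _ (by omega)), h01⟩
  have mE3 : ((1:ℤ),(-1:ℤ)) ∈ I2 C (0,0) :=
    ⟨W2 _ (1,0) _ (hexAdj _ _ _ _ (by omega)) (hexAdj _ _ _ _ (by omega)), h1m1⟩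
  -- u = (0,1)
  have mF1 : ((0:ℤ),(0:ℤ)) ∈ I2 C (0,1) := ⟨W1 _ _ (hexAdj _ _ _ _ (by omega)), h00⟩
  have mF2 : ((0:ℤ),(1:ℤ)) ∈ I2 C (0,1) := ⟨W0 _, h01⟩
  -- u = (1,-1)
  have mG1 : ((0:ℤ),(0:ℤ)) ∈ I2 C (1,-1) :=
    ⟨W2 _ (1,0) _ (hexAdj _ _ _ _ (by omega)) (hexAdj _ _ _ _ (by omega)), h00⟩
  have mG2 : ((1:ℤ),(-1:ℤ)) ∈ I2 C (1,-1) := ⟨W0 _, h1m1⟩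
  -- u = (1,0)
  have mH1 : ((0:ℤ),(0:ℤ)) ∈ I2 C (1,0) := ⟨W1 _ _ (hexAdj _ _ _ _ (by omega)), h00⟩
  have mH2 : ((0:ℤ),(1:ℤ)) ∈ I2 C (1,0) :=
    ⟨W2 _ (0,0) _ (hexAdj _ _ _ _ (by omega)) (hexAdj _ _ _ _ (by omega)), h01⟩
  have mH3 : ((1:ℤ),(-1:ℤ)) ∈ I2 C (1,0) := ⟨W1 _ _ (hexAdj _ _ _ _ (by omega)), h1m1⟩
  -- u = (1,1)
  have mI1 : ((0:ℤ),(0:ℤ)) ∈ I2 C (1,1) :=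
    ⟨W2 _ (0,1) _ (hexAdj _ _ _ _ (by omega)) (hexAdj _ _ _ _ (by omega)), h00⟩
  have mI2 : ((0:ℤ),(1:ℤ)) ∈ I2 C (1,1) := ⟨W1 _ _ (hexAdj _ _ _ _ (by omega)), h01⟩
  -- u = (2,0)
  have mJ1 : ((0:ℤ),(0:ℤ)) ∈ I2 C (2,0) :=
    ⟨W2 _ (1,0) _ (hexAdj _ _ _ _ (by omega)) (hexAdj _ _ _ _ (by omega)), h00⟩
  have mJ2 : ((1:ℤ),(-1:ℤ)) ∈ I2 C (2,0) :=
    ⟨W2 _ (1,0) _ (hexAdj _ _ _ _ (by omega)) (hexAdj _ _ _ _ (by omega)), h1m1⟩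
  -- distinctness of points
  have ne1 : ((0:ℤ),(0:ℤ)) ≠ ((0:ℤ),(1:ℤ)) := by norm_num [Prod.ext_iff]
  have ne2 : ((0:ℤ),(0:ℤ)) ≠ ((-3:ℤ),(0:ℤ)) := by norm_num [Prod.ext_iff]
  have ne3 : ((0:ℤ),(0:ℤ)) ≠ ((1:ℤ),(-1:ℤ)) := by norm_num [Prod.ext_iff]
  have ne4 : ((0:ℤ),(1:ℤ)) ≠ ((1:ℤ),(-1:ℤ)) := by norm_num [Prod.ext_iff]
  -- lower bounds on ncards
  have ha2 : 2 ≤ (I2 C (-2,0)).ncard := two_le_ncard ne2 mA1 mA2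
  have hb2 : 2 ≤ (I2 C (-1,-1)).ncard := two_le_ncard ne3 mB1 mB2
  have hc3 : 3 ≤ (I2 C (-1,0)).ncard := three_le_ncard ne1 ne2 (by norm_num [Prod.ext_iff]) mC1 mC2 mC3
  have hd2 : 2 ≤ (I2 C (-1,1)).ncard := two_le_ncard ne1 mD1 mD2
  have he3 : 3 ≤ (I2 C (0,0)).ncard := three_le_ncard ne1 ne3 ne4 mE1 mE2 mE3
  have hf2 : 2 ≤ (I2 C (0,1)).ncard := two_le_ncard ne1 mF1 mF2
  have hg2 : 2 ≤ (I2 C (1,-1)).ncard := two_le_ncard ne3 mG1 mG2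
  have hh3 : 3 ≤ (I2 C (1,0)).ncard := three_le_ncard ne1 ne3 ne4 mH1 mH2 mH3
  have hi2 : 2 ≤ (I2 C (1,1)).ncard := two_le_ncard ne1 mI1 mI2
  have hj2 : 2 ≤ (I2 C (2,0)).ncard := two_le_ncard ne3 mJ1 mJ2
  -- exclusion facts
  have hdf : ¬((I2 C (-1,1)).ncard ≤ 2 ∧ (I2 C (0,1)).ncard ≤ 2) := by
    rintro ⟨h1, h2⟩
    exact excl2 hC (by norm_num [Prod.ext_iff]) ne1 mD1 mD2 mF1 mF2 h1 h2
  have hdi : ¬((I2 C (-1,1)).ncard ≤ 2 ∧ (I2 C (1,1)).ncard ≤ 2) := by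
    rintro ⟨h1, h2⟩
    exact excl2 hC (by norm_num [Prod.ext_iff]) ne1 mD1 mD2 mI1 mI2 h1 h2
  have hfi : ¬((I2 C (0,1)).ncard ≤ 2 ∧ (I2 C (1,1)).ncard ≤ 2) := by
    rintro ⟨h1, h2⟩
    exact excl2 hC (by norm_num [Prod.ext_iff]) ne1 mF1 mF2 mI1 mI2 h1 h2
  have hbg : ¬((I2 C (-1,-1)).ncard ≤ 2 ∧ (I2 C (1,-1)).ncard ≤ 2) := by
    rintro ⟨h1, h2⟩
    exact excl2 hC (by norm_num [Prod.ext_iff]) ne3 mB1 mB2 mG1 mG2 h1 h2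
  have hbj : ¬((I2 C (-1,-1)).ncard ≤ 2 ∧ (I2 C (2,0)).ncard ≤ 2) := by
    rintro ⟨h1, h2⟩
    exact excl2 hC (by norm_num [Prod.ext_iff]) ne3 mB1 mB2 mJ1 mJ2 h1 h2
  have hgj : ¬((I2 C (1,-1)).ncard ≤ 2 ∧ (I2 C (2,0)).ncard ≤ 2) := by
    rintro ⟨h1, h2⟩
    exact excl2 hC (by norm_num [Prod.ext_iff]) ne3 mG1 mG2 mJ1 mJ2 h1 h2
  have heh : ¬((I2 C (0,0)).ncard ≤ 3 ∧ (I2 C (1,0)).ncard ≤ 3) := by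
    rintro ⟨h1, h2⟩
    exact excl3 hC (by norm_num [Prod.ext_iff]) ne1 ne3 ne4 mE1 mE2 mE3 mH1 mH2 mH3 h1 h2
  -- rewrite the share as a finite sum
  have hset : hexBall 2 ((0:ℤ),(0:ℤ)) = (↑ballFinset : Set (ℤ × ℤ)) :=
    ball00.trans coe_ballFinset.symm
  rw [share2, hset, Finset.tsum_subtype' ballFinset (fun u => 1 / ((I2 C u).ncard : ℝ)),
    sum_expand]
  -- combine
  have T1 := tripleBound hd2 hf2 hi2 hdf hdi hfi
  have T2 := tripleBound hb2 hg2 hj2 hbg hbj hgj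
  have P := pairBound he3 hh3 heh
  have B1 := inv2 ha2
  have B2 := inv3 hc3
  linarith
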